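/- If the initial residual of deflated MINRES satisfies r₀ ∈ span(V) where V consists of M-orthonormal eigenvectors of M⁻¹A for eigenvalues λ_{d+1},…,λ_N, then for every polynomial p of degree at most n with p(0)=1, ‖p(P_M M⁻¹ A) r₀‖_M ≤ ‖r₀‖_M · max_{i∈{d+1,…,N}} |p(λᵢ)|. -/

import Mathlib

open scoped InnerProductSpace

/-- If r₀ ∈ span(V) with V M-orthonormal eigenvectors of M⁻¹A for λ_{d+1},…,λ_N, then
for every polynomial p of degree ≤ n with p(0)=1:
‖p(P_M M⁻¹ A) r₀‖_M ≤ ‖r₀‖_M · max_i |p(λᵢ)|. -/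
theorem stmt9 {H : Type*} [NormedAddCommGroup H] [InnerProductSpace ℂ H]
    [FiniteDimensional ℂ H] {d m n : ℕ} (hm : 0 < m)
    (M A Minv : H →ₗ[ℂ] H)
    (hM : M.IsSymmetric) (hA : A.IsSymmetric)
    (hMbij : Function.Bijective M) (hAbij : Function.Bijective A)
    (hMinv : ∀ x, M (Minv x) = x ∧ Minv (M x) = x)
    (hMpos : ∀ x : H, x ≠ 0 → 0 < (⟪x, M x⟫_ℂ).re)
    (U : Fin d → H)
    (hUinv : ∀ i, Minv (A (U i)) ∈ Submodule.span ℂ (Set.range U))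
    (E : Matrix (Fin d) (Fin d) ℂ)
    (hE : E = Matrix.of fun i j => ⟪U i, A (U j)⟫_ℂ)
    (hEunit : IsUnit E.det)
    (PM : H →ₗ[ℂ] H)
    (hPM : ∀ x, PM x = x - ∑ i, (∑ j, E⁻¹ i j * ⟪M (U j), x⟫_ℂ) • Minv (A (U i)))
    (mu : Fin m → ℝ)
    (V : Fin m → H)
    (hVeig : ∀ i, Minv (A (V i)) = (mu i : ℂ) • V i)
    (hVon : ∀ i j, ⟪M (V i), V j⟫_ℂ = if i = j then 1 else 0)
    (hVU : ∀ i j, ⟪M (U j), V i⟫_ℂ = 0)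
    (r0 : H) (hr0 : r0 ∈ Submodule.span ℂ (Set.range V))
    (p : Polynomial ℂ) (hdeg : p.natDegree ≤ n) (hp0 : p.eval 0 = 1) :
    Real.sqrt ((⟪M ((Polynomial.aeval (PM ∘ₗ Minv ∘ₗ A : Module.End ℂ H) p) r0),
        (Polynomial.aeval (PM ∘ₗ Minv ∘ₗ A : Module.End ℂ H) p) r0⟫_ℂ).re)
      ≤ Real.sqrt ((⟪M r0, r0⟫_ℂ).re) *
        (⨆ i : Fin m, ‖p.eval (mu i : ℂ)‖) := by
  classical
  have : Nonempty (Fin m) := ⟨⟨0, hm⟩⟩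
  set T : Module.End ℂ H := (PM ∘ₗ Minv ∘ₗ A : Module.End ℂ H) with hTdef
  -- V i are eigenvectors of T
  have hVne : ∀ i, V i ≠ 0 := by
    intro i h
    have := hVon i i
    simp [h] at this
  have hTV : ∀ i, T (V i) = (mu i : ℂ) • V i := by
    intro i
    have h1 : T (V i) = PM ((mu i : ℂ) • V i) := by
      simp [hTdef, LinearMap.comp_apply, hVeig i]
    rw [h1, hPM]
    have hz : ∀ j, ⟪M (U j), (mu i : ℂ) • V i⟫_ℂ = 0 := by
      intro j; rw [inner_smul_right, hVU]; ring
    rw [sub_eq_self]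
    apply Finset.sum_eq_zero
    intro j _
    have h0 : (∑ k, E⁻¹ j k * ⟪M (U k), (mu i : ℂ) • V i⟫_ℂ) = 0 := by
      apply Finset.sum_eq_zero; intro k _; rw [hz]; ring
    rw [h0, zero_smul]
  have haeval : ∀ i, (Polynomial.aeval T p) (V i) = (p.eval (mu i : ℂ)) • V i := by
    intro i
    exact Module.End.aeval_apply_of_hasEigenvector
      ⟨Module.End.mem_eigenspace_iff.mpr (hTV i), hVne i⟩
  obtain ⟨c, hc⟩ := (Submodule.mem_span_range_iff_exists_fun ℂ).mp hr0
  -- inner product of combinations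
  have hinner : ∀ a : Fin m → ℂ,
      (⟪M (∑ i, a i • V i), ∑ i, a i • V i⟫_ℂ).re = ∑ i, Complex.normSq (a i) := by
    intro a
    rw [map_sum]
    simp_rw [map_smul, sum_inner, inner_sum, inner_smul_left, inner_smul_right, hVon,
      mul_ite, mul_one, mul_zero]
    rw [Complex.re_sum]
    apply Finset.sum_congr rfl
    intro i _
    rw [Finset.sum_eq_single i (fun b _ hb => by simp [Ne.symm hb]) (by simp)]
    simp [Complex.mul_re, Complex.normSq_apply, mul_comm]
  have hy : (Polynomial.aeval T p) r0 = ∑ i, (c i * p.eval (mu i : ℂ)) • V i := by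
    rw [← hc, map_sum]
    congr 1; ext i
    rw [map_smul, haeval, smul_smul]
  set S := ⨆ i : Fin m, ‖p.eval (mu i : ℂ)‖ with hS
  have hbdd : BddAbove (Set.range fun i : Fin m => ‖p.eval (mu i : ℂ)‖) :=
    Set.Finite.bddAbove (Set.finite_range _)
  have hle : ∀ i, ‖p.eval (mu i : ℂ)‖ ≤ S := fun i => le_ciSup hbdd i
  have hS0 : 0 ≤ S := le_trans (norm_nonneg _) (hle ⟨0, hm⟩)
  rw [hy, ← hc, hinner, hinner]
  have hsum : ∑ i, Complex.normSq (c i * p.eval (mu i : ℂ))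
      ≤ (∑ i, Complex.normSq (c i)) * S ^ 2 := by
    rw [Finset.sum_mul]
    apply Finset.sum_le_sum
    intro i _
    rw [Complex.normSq_mul]
    have h1 : Complex.normSq (p.eval (mu i : ℂ)) ≤ S ^ 2 := by
      have := hle i
      calc Complex.normSq (p.eval (mu i : ℂ))
          = ‖p.eval (mu i : ℂ)‖ ^ 2 := (Complex.sq_norm _).symm
        _ ≤ S ^ 2 := by
            apply pow_le_pow_left₀ (norm_nonneg _) this
    exact mul_le_mul_of_nonneg_left h1 (Complex.normSq_nonneg _)
  calc Real.sqrt (∑ i, Complex.normSq (c i * p.eval (mu i : ℂ)))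
      ≤ Real.sqrt ((∑ i, Complex.normSq (c i)) * S ^ 2) := Real.sqrt_le_sqrt hsum
    _ = Real.sqrt (∑ i, Complex.normSq (c i)) * S := by
        rw [Real.sqrt_mul (Finset.sum_nonneg fun i _ => Complex.normSq_nonneg _),
          Real.sqrt_sq hS0]
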